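/- If 𝒞 is a finitely complete majority category and 𝒟 is any small category, then the functor category 𝒞^𝒟 (functors 𝒟 → 𝒞 and natural transformations) is a majority category. -/

import Mathlib

open CategoryTheory CategoryTheory.Limits

/-- The triple of morphisms `(a, b, c)` is related by the ternary relation
`(r₁, r₂, r₃)`. -/
def TernaryRelated {C : Type*} [Category C] {R A B D S : C}
    (r₁ : R ⟶ A) (r₂ : R ⟶ B) (r₃ : R ⟶ D) (a : S ⟶ A) (b : S ⟶ B) (c : S ⟶ D) : Prop :=
  ∃ f : S ⟶ R, f ≫ r₁ = a ∧ f ≫ r₂ = b ∧ f ≫ r₃ = c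

/-- A category is a majority category when every (jointly monomorphic) internal ternary
relation is strictly closed with respect to the majority matrix. -/
def IsMajorityCategory (C : Type*) [Category C] : Prop :=
  ∀ ⦃A B D R : C⦄ (r₁ : R ⟶ A) (r₂ : R ⟶ B) (r₃ : R ⟶ D),
    (∀ ⦃S : C⦄ (f g : S ⟶ R),
      f ≫ r₁ = g ≫ r₁ → f ≫ r₂ = g ≫ r₂ → f ≫ r₃ = g ≫ r₃ → f = g) →
    ∀ ⦃S : C⦄ (a₁ a₂ : S ⟶ A) (b₁ b₂ : S ⟶ B) (c₁ c₂ : S ⟶ D),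
      TernaryRelated r₁ r₂ r₃ a₁ b₁ c₂ →
      TernaryRelated r₁ r₂ r₃ a₁ b₂ c₁ →
      TernaryRelated r₁ r₂ r₃ a₂ b₁ c₁ →
      TernaryRelated r₁ r₂ r₃ a₁ b₁ c₁

section Aux

variable {C : Type*} [Category C] [HasFiniteLimits C] {D : Type*} [SmallCategory D]

/-- Morphisms into the value at `d` of a binary product in a functor category are
determined by their composites with the two projections. -/
lemma eval_prod_hom_ext {X Y : D ⥤ C} (d : D) {T : C} (u v : T ⟶ (X ⨯ Y).obj d)
    (h1 : u ≫ (prod.fst : X ⨯ Y ⟶ X).app d = v ≫ (prod.fst : X ⨯ Y ⟶ X).app d)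
    (h2 : u ≫ (prod.snd : X ⨯ Y ⟶ Y).app d = v ≫ (prod.snd : X ⨯ Y ⟶ Y).app d) :
    u = v := by
  have hlim := isLimitOfPreserves ((evaluation D C).obj d) (prodIsProd X Y)
  apply hlim.hom_ext
  rintro ⟨⟨⟩⟩ <;> simpa using ‹_›

/-- A jointly monomorphic triple of natural transformations is pointwise jointly
monomorphic, when the base category has finite limits. -/
lemma jointly_mono_app {A B E R : D ⥤ C} (r₁ : R ⟶ A) (r₂ : R ⟶ B) (r₃ : R ⟶ E)
    (hR : ∀ ⦃S : D ⥤ C⦄ (f g : S ⟶ R),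
      f ≫ r₁ = g ≫ r₁ → f ≫ r₂ = g ≫ r₂ → f ≫ r₃ = g ≫ r₃ → f = g)
    (d : D) {T : C} (f g : T ⟶ R.obj d)
    (h₁ : f ≫ r₁.app d = g ≫ r₁.app d) (h₂ : f ≫ r₂.app d = g ≫ r₂.app d)
    (h₃ : f ≫ r₃.app d = g ≫ r₃.app d) : f = g := by
  let m : R ⟶ A ⨯ (B ⨯ E) := prod.lift r₁ (prod.lift r₂ r₃)
  have hm : Mono m := by
    constructor
    intro Z u v huv
    apply hR
    · have h := huv =≫ (prod.fst : A ⨯ (B ⨯ E) ⟶ A)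
      simp only [m, prod.comp_lift] at h
      rwa [prod.lift_fst, prod.lift_fst] at h
    · have h := huv =≫ ((prod.snd : A ⨯ (B ⨯ E) ⟶ B ⨯ E) ≫ prod.fst)
      simp only [m, prod.comp_lift] at h
      rwa [prod.lift_snd_assoc, prod.lift_snd_assoc, prod.lift_fst, prod.lift_fst] at h
    · have h := huv =≫ ((prod.snd : A ⨯ (B ⨯ E) ⟶ B ⨯ E) ≫ prod.snd)
      simp only [m, prod.comp_lift] at h
      rwa [prod.lift_snd_assoc, prod.lift_snd_assoc, prod.lift_snd, prod.lift_snd] at h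
  have hma : Mono (m.app d) := (NatTrans.mono_iff_mono_app m).mp hm d
  rw [← cancel_mono (m.app d)]
  have e1 : m.app d ≫ (prod.fst : A ⨯ (B ⨯ E) ⟶ A).app d = r₁.app d := by
    simp only [m]; rw [← NatTrans.comp_app, prod.lift_fst]
  have e2 : m.app d ≫ (prod.snd : A ⨯ (B ⨯ E) ⟶ B ⨯ E).app d
      = (prod.lift r₂ r₃).app d := by
    simp only [m]; rw [← NatTrans.comp_app, prod.lift_snd]
  have e3 : (prod.lift r₂ r₃).app d ≫ (prod.fst : B ⨯ E ⟶ B).app d = r₂.app d := by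
    rw [← NatTrans.comp_app, prod.lift_fst]
  have e4 : (prod.lift r₂ r₃).app d ≫ (prod.snd : B ⨯ E ⟶ E).app d = r₃.app d := by
    rw [← NatTrans.comp_app, prod.lift_snd]
  apply eval_prod_hom_ext
  · rw [Category.assoc, Category.assoc, e1]; exact h₁
  · apply eval_prod_hom_ext
    · simp only [Category.assoc, reassoc_of% e2, e3]
      exact h₂
    · simp only [Category.assoc, reassoc_of% e2, e4]
      exact h₃

end Aux

/-- If `C` is a finitely complete majority category and `D` is a small category,
then the functor category `D ⥤ C` is a majority category. -/
theorem functor_category_majority {C : Type*} [Category C] [HasFiniteLimits C]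
    (hmaj : IsMajorityCategory C) (D : Type*) [SmallCategory D] :
    IsMajorityCategory (D ⥤ C) := by
  intro A B E R r₁ r₂ r₃ hR S a₁ a₂ b₁ b₂ c₁ c₂ h12 h13 h23
  obtain ⟨p, hp₁, hp₂, hp₃⟩ := h12
  obtain ⟨q, hq₁, hq₂, hq₃⟩ := h13
  obtain ⟨s, hs₁, hs₂, hs₃⟩ := h23
  have jm : ∀ (d : D) {T : C} (f g : T ⟶ R.obj d),
      f ≫ r₁.app d = g ≫ r₁.app d → f ≫ r₂.app d = g ≫ r₂.app d →
      f ≫ r₃.app d = g ≫ r₃.app d → f = g :=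
    fun d T f g => jointly_mono_app r₁ r₂ r₃ hR d f g
  have key : ∀ d : D, ∃ f : S.obj d ⟶ R.obj d,
      f ≫ r₁.app d = a₁.app d ∧ f ≫ r₂.app d = b₁.app d ∧ f ≫ r₃.app d = c₁.app d := by
    intro d
    refine hmaj (r₁.app d) (r₂.app d) (r₃.app d)
      (fun T f g h1 h2 h3 => jm d f g h1 h2 h3)
      (a₁.app d) (a₂.app d) (b₁.app d) (b₂.app d) (c₁.app d) (c₂.app d)
      ⟨p.app d, ?_, ?_, ?_⟩ ⟨q.app d, ?_, ?_, ?_⟩ ⟨s.app d, ?_, ?_, ?_⟩ <;>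
      rw [← NatTrans.comp_app]
    · rw [hp₁]
    · rw [hp₂]
    · rw [hp₃]
    · rw [hq₁]
    · rw [hq₂]
    · rw [hq₃]
    · rw [hs₁]
    · rw [hs₂]
    · rw [hs₃]
  choose f hf₁ hf₂ hf₃ using key
  refine ⟨{ app := f, naturality := ?_ }, ?_, ?_, ?_⟩
  · intro d d' α
    apply jm d'
    · rw [Category.assoc, hf₁ d', a₁.naturality, Category.assoc, r₁.naturality,
        ← Category.assoc, hf₁ d]
    · rw [Category.assoc, hf₂ d', b₁.naturality, Category.assoc, r₂.naturality,
        ← Category.assoc, hf₂ d]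
    · rw [Category.assoc, hf₃ d', c₁.naturality, Category.assoc, r₃.naturality,
        ← Category.assoc, hf₃ d]
  · ext d; simpa using hf₁ d
  · ext d; simpa using hf₂ d
  · ext d; simpa using hf₃ d
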